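/- Let l and m be nonnegative integers, let z : ℝ → ℝ^s be infinitely differentiable, and fix t ∈ ℝ. Then, as h → 0, the truncation error of the Obreshkov formula satisfies Σ_{i=0}^{m} (−1)^i · α_{i,l,m} · h^i · z^{(i)}(t + h) − Σ_{i=0}^{l} α_{i,m,l} · h^i · z^{(i)}(t) = O(h^{l+m+1}), where z^{(i)} denotes the i-th derivative of z and the big-O is with respect to h tending to 0. -/

import Mathlib

/-- The Obreshkov coefficient `α_{i,l,m} = ((m+l−i)! / (m+l)!) · binom(m, i)`. -/
noncomputable def obreshkovAlpha (i l m : ℕ) : ℝ :=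
  (Nat.factorial (m + l - i) : ℝ) / (Nat.factorial (m + l)) * (Nat.choose m i)

open Finset Asymptotics Topology

section aux
variable {E : Type*} [NormedAddCommGroup E] [NormedSpace ℝ E]

lemma od_iteratedDeriv_add {f g : ℝ → E} {n : ℕ} (hf : ContDiff ℝ (⊤ : ℕ∞) f)
    (hg : ContDiff ℝ (⊤ : ℕ∞) g) (x : ℝ) :
    iteratedDeriv n (fun y => f y + g y) x = iteratedDeriv n f x + iteratedDeriv n g x := by
  have h := iteratedDerivWithin_add (Set.mem_univ x) uniqueDiffOn_univ
    (f := f) (g := g) (n := n) ((hf.of_le (by exact_mod_cast le_top) : ContDiff ℝ n f).contDiffWithinAt) ((hg.of_le (by exact_mod_cast le_top) : ContDiff ℝ n g).contDiffWithinAt)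
  simp only [iteratedDerivWithin_univ] at h
  exact h


lemma od_iteratedDeriv_csmul {f : ℝ → E} {n : ℕ} (hf : ContDiff ℝ (⊤ : ℕ∞) f) (c : ℝ) (x : ℝ) :
    iteratedDeriv n (fun y => c • f y) x = c • iteratedDeriv n f x := by
  have h := iteratedDerivWithin_const_smul (Set.mem_univ x) uniqueDiffOn_univ c
    (f := f) (n := n) ((hf.of_le (by exact_mod_cast le_top) : ContDiff ℝ n f).contDiffWithinAt)
  simp only [iteratedDerivWithin_univ] at h
  exact h


lemma od_iteratedDeriv_zero_fun {n : ℕ} : iteratedDeriv n (fun _ : ℝ => (0 : E)) = fun _ => 0 := by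
  induction n with
  | zero => simp [iteratedDeriv_zero]
  | succ n ih => rw [iteratedDeriv_succ']; simpa [deriv_const'] using ih


lemma od_iteratedDeriv_const {n : ℕ} (c : E) (x : ℝ) :
    iteratedDeriv n (fun _ : ℝ => c) x = if n = 0 then c else 0 := by
  cases n with
  | zero => simp [iteratedDeriv_zero]
  | succ n => rw [iteratedDeriv_succ']; simp [deriv_const', od_iteratedDeriv_zero_fun]


lemma od_iteratedDeriv_sum {ι : Type*} (s : Finset ι) (f : ι → ℝ → E)
    (hf : ∀ i ∈ s, ContDiff ℝ (⊤ : ℕ∞) (f i)) (n : ℕ) (x : ℝ) :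
    iteratedDeriv n (fun y => ∑ i ∈ s, f i y) x = ∑ i ∈ s, iteratedDeriv n (f i) x := by
  classical
  induction s using Finset.cons_induction with
  | empty => simp [od_iteratedDeriv_zero_fun]
  | cons a s ha ih =>
    simp only [Finset.sum_cons]
    have h1 : ContDiff ℝ (⊤ : ℕ∞) (f a) := hf a (Finset.mem_cons_self a s)
    have h2 : ContDiff ℝ (⊤ : ℕ∞) (fun y => ∑ i ∈ s, f i y) :=
      ContDiff.sum fun i hi => hf i (Finset.mem_cons_of_mem hi)
    rw [show (fun y => f a y + ∑ i ∈ s, f i y) = (fun y => f a y + (fun y => ∑ i ∈ s, f i y) y) from rfl]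
    rw [od_iteratedDeriv_add h1 h2, ih (fun i hi => hf i (Finset.mem_cons_of_mem hi))]


lemma od_iteratedDeriv_sub {f g : ℝ → E} {n : ℕ} (hf : ContDiff ℝ (⊤ : ℕ∞) f)
    (hg : ContDiff ℝ (⊤ : ℕ∞) g) (x : ℝ) :
    iteratedDeriv n (fun y => f y - g y) x = iteratedDeriv n f x - iteratedDeriv n g x := by
  have h := iteratedDerivWithin_sub (Set.mem_univ x) uniqueDiffOn_univ
    (f := f) (g := g) (n := n) ((hf.of_le (by exact_mod_cast le_top) : ContDiff ℝ n f).contDiffWithinAt) ((hg.of_le (by exact_mod_cast le_top) : ContDiff ℝ n g).contDiffWithinAt)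
  simp only [iteratedDerivWithin_univ] at h
  exact h


lemma od_iteratedDeriv_iteratedDeriv (a b : ℕ) (f : ℝ → E) :
    iteratedDeriv a (iteratedDeriv b f) = iteratedDeriv (a + b) f := by
  simp only [iteratedDeriv_eq_iterate]
  rw [Function.iterate_add deriv a b]
  rfl


lemma od_contDiff_deriv {g : ℝ → E} (hg : ContDiff ℝ (⊤ : ℕ∞) g) : ContDiff ℝ (⊤ : ℕ∞) (deriv g) := by
  have := hg.iterate_deriv 1
  simpa using this


lemma od_iteratedDeriv_pow_smul (i j : ℕ) {g : ℝ → E} (hg : ContDiff ℝ (⊤ : ℕ∞) g) :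
    iteratedDeriv j (fun h : ℝ => h ^ i • g h) 0
      = (j.descFactorial i : ℝ) • iteratedDeriv (j - i) g 0 := by
  induction j generalizing i g with
  | zero =>
    cases i with
    | zero => simp
    | succ i => simp
  | succ j ih =>
    cases i with
    | zero => simp only [pow_zero, one_smul, Nat.descFactorial_zero, Nat.cast_one, Nat.sub_zero]
    | succ i =>
      have hg' : ContDiff ℝ (⊤ : ℕ∞) (deriv g) := od_contDiff_deriv hg
      have hsm1 : ContDiff ℝ (⊤ : ℕ∞) (fun h : ℝ => h ^ i • g h) :=
        (contDiff_id.pow i).smul hg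
      have hsm2 : ContDiff ℝ (⊤ : ℕ∞) (fun h : ℝ => h ^ (i+1) • deriv g h) :=
        (contDiff_id.pow (i+1)).smul hg'
      have hderiv : deriv (fun h : ℝ => h ^ (i+1) • g h)
          = fun h : ℝ => ((i+1 : ℝ) • (h ^ i • g h)) + h ^ (i+1) • deriv g h := by
        funext x
        have h1 : HasDerivAt (fun h : ℝ => h ^ (i+1)) (((i:ℝ)+1) * x ^ i) x := by
          simpa using hasDerivAt_pow (i+1) x
        have h2 : HasDerivAt g (deriv g x) x :=
          (hg.differentiable (by simp) x).hasDerivAt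
        rw [show (fun h : ℝ => h ^ (i+1) • g h) = (fun h : ℝ => h ^ (i+1)) • g from rfl, (h1.smul h2).deriv, mul_smul]
        abel
      rw [iteratedDeriv_succ', hderiv,
        od_iteratedDeriv_add (f := fun h : ℝ => ((i:ℝ)+1) • (h ^ i • g h)) (contDiff_const.smul hsm1) hsm2 0,
        od_iteratedDeriv_csmul hsm1 _ 0, ih i hg, ih (i+1) hg']
      have hidx : iteratedDeriv (j - (i+1)) (deriv g) 0 = iteratedDeriv (j - (i+1) + 1) g 0 := by
        rw [← iteratedDeriv_succ']
      rw [hidx, Nat.succ_sub_succ, Nat.succ_descFactorial_succ]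
      by_cases hij : i + 1 ≤ j
      · have : j - (i+1) + 1 = j - i := by omega
        rw [this, smul_smul, ← add_smul]
        congr 1
        rw [Nat.descFactorial_succ]
        have hcast : ((j - i : ℕ) : ℝ) = (j : ℝ) - i := by
          have : i ≤ j := by omega
          push_cast [this]; ring
        push_cast [hcast]
        ring
      · have hz : j.descFactorial (i+1) = 0 := Nat.descFactorial_of_lt (by omega)
        rw [hz]
        rcases Nat.lt_or_ge j i with hji | hji
        · have hz2 : j.descFactorial i = 0 := Nat.descFactorial_of_lt hji
          simp [hz2]
        · have : i = j := by omega
          subst this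
          simp [smul_smul]


lemma od_abs_le_of_mem_uIcc {x h : ℝ} (hx : x ∈ Set.uIcc 0 h) : |x| ≤ |h| := by
  rcases Set.mem_uIcc.mp hx with ⟨h1, h2⟩ | ⟨h1, h2⟩
  · rw [abs_of_nonneg h1]; exact le_trans h2 (le_abs_self h)
  · rw [abs_of_nonpos h2]
    have : -|h| ≤ h := neg_abs_le h
    linarith [neg_le_neg h1]


lemma od_isBigO_pow_succ_of_deriv {f : ℝ → E} (hf : Differentiable ℝ f) (h0 : f 0 = 0)
    {n : ℕ} (hd : (deriv f) =O[𝓝 (0:ℝ)] fun h : ℝ => h ^ n) :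
    f =O[𝓝 (0:ℝ)] fun h : ℝ => h ^ (n+1) := by
  obtain ⟨C, hC0, hC⟩ := hd.exists_pos
  rw [Asymptotics.isBigOWith_iff, Metric.eventually_nhds_iff] at hC
  obtain ⟨δ, hδ, hball⟩ := hC
  rw [Asymptotics.isBigO_iff]
  refine ⟨C, Metric.eventually_nhds_iff.mpr ⟨δ, hδ, fun {h} hh => ?_⟩⟩
  have hhabs : |h| < δ := by simpa [Real.dist_eq] using hh
  have key : ∀ x ∈ Set.uIcc (0:ℝ) h, HasFDerivWithinAt f
      (ContinuousLinearMap.smulRight (1 : ℝ →L[ℝ] ℝ) (deriv f x)) (Set.uIcc 0 h) x :=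
    fun x _ => ((hf x).hasDerivAt.hasFDerivAt).hasFDerivWithinAt
  have bound : ∀ x ∈ Set.uIcc (0:ℝ) h,
      ‖ContinuousLinearMap.smulRight (1 : ℝ →L[ℝ] ℝ) (deriv f x)‖ ≤ C * |h| ^ n := by
    intro x hx
    have hxh : |x| ≤ |h| := od_abs_le_of_mem_uIcc hx
    have hxδ : dist x 0 < δ := by
      rw [Real.dist_eq, sub_zero]; exact lt_of_le_of_lt hxh hhabs
    have hb := hball hxδ
    rw [ContinuousLinearMap.norm_smulRight_apply, ContinuousLinearMap.one_def,
      ContinuousLinearMap.norm_id, one_mul]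
    calc ‖deriv f x‖ ≤ C * ‖x ^ n‖ := hb
      _ ≤ C * |h| ^ n := by
          rw [norm_pow, Real.norm_eq_abs]
          exact mul_le_mul_of_nonneg_left (pow_le_pow_left₀ (abs_nonneg x) hxh n) hC0.le
  have hmv := (convex_uIcc (0:ℝ) h).norm_image_sub_le_of_norm_hasFDerivWithin_le key bound
    Set.left_mem_uIcc Set.right_mem_uIcc
  rw [h0, sub_zero, sub_zero] at hmv
  calc ‖f h‖ ≤ C * |h| ^ n * ‖h‖ := hmv
    _ = C * ‖h ^ (n+1)‖ := by rw [norm_pow, Real.norm_eq_abs, pow_succ]; ring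


lemma od_isBigO_pow_of_iteratedDeriv_eq_zero {f : ℝ → E} (hf : ContDiff ℝ (⊤ : ℕ∞) f) (n : ℕ)
    (h0 : ∀ j ≤ n, iteratedDeriv j f 0 = 0) :
    f =O[𝓝 (0:ℝ)] fun h : ℝ => h ^ (n+1) := by
  induction n generalizing f with
  | zero =>
    apply od_isBigO_pow_succ_of_deriv (hf.differentiable (by simp))
      (by simpa using h0 0 le_rfl)
    simp only [pow_zero]
    exact ((hf.continuous_deriv (by exact_mod_cast le_top)).continuousAt (x := (0:ℝ))).isBigO_one ℝ
  | succ n ih =>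
    apply od_isBigO_pow_succ_of_deriv (hf.differentiable (by simp))
      (by simpa using h0 0 (Nat.zero_le _))
    have hdz : ∀ j ≤ n, iteratedDeriv j (deriv f) 0 = 0 := by
      intro j hj
      rw [← iteratedDeriv_succ']
      exact h0 (j+1) (by omega)
    exact ih (by have := hf.iterate_deriv 1; simpa using this) hdz


lemma od_choose_alt_sum (l m j : ℕ) :
    ∑ i ∈ Finset.range (j+1), (-1:ℝ)^i * (m.choose i) * ((m + l - i).choose (j - i))
      = l.choose j := by
  induction m generalizing j with
  | zero =>
    rw [Finset.sum_eq_single 0]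
    · simp
    · intro i hi hne
      match i, hne with
      | i+1, _ => simp
    · intro hn; exact absurd (Finset.mem_range.mpr (by omega)) hn
  | succ m ih =>
    cases j with
    | zero => simp
    | succ j =>
      have hsplit : ∀ i ∈ Finset.range (j+2),
          (-1:ℝ)^i * ((m+1).choose i) * ((m+1+l-i).choose (j+1-i))
            = (-1:ℝ)^i * (m.choose i) * ((m+1+l-i).choose (j+1-i))
              + (-1:ℝ)^i * (((m+1).choose i : ℝ) - (m.choose i)) * ((m+1+l-i).choose (j+1-i)) := by
        intro i _; ring
      rw [Finset.sum_congr rfl hsplit, Finset.sum_add_distrib]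
      -- U part
      have hU : ∑ i ∈ Finset.range (j+2),
          (-1:ℝ)^i * (((m+1).choose i : ℝ) - (m.choose i)) * ((m+1+l-i).choose (j+1-i))
          = -(l.choose j : ℝ) := by
        rw [Finset.sum_range_succ']
        have h0 : (-1:ℝ)^0 * (((m+1).choose 0 : ℝ) - (m.choose 0)) * ((m+1+l-0).choose (j+1-0)) = 0 := by
          simp
        rw [h0, add_zero]
        have hterm : ∀ i ∈ Finset.range (j+1),
            (-1:ℝ)^(i+1) * (((m+1).choose (i+1) : ℝ) - (m.choose (i+1))) * ((m+1+l-(i+1)).choose (j+1-(i+1)))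
              = -((-1:ℝ)^i * (m.choose i) * ((m+l-i).choose (j-i))) := by
          intro i _
          have h1 : ((m+1).choose (i+1) : ℝ) - (m.choose (i+1)) = (m.choose i : ℝ) := by
            rw [Nat.choose_succ_succ]
            push_cast
            ring
          have h2 : m+1+l-(i+1) = m+l-i := by omega
          have h3 : j+1-(i+1) = j-i := by omega
          rw [h1, h2, h3, pow_succ]
          ring
        rw [Finset.sum_congr rfl hterm, Finset.sum_neg_distrib]
        rw [ih j]
      rw [hU]
      -- V part
      have hV : ∑ i ∈ Finset.range (j+2),
          (-1:ℝ)^i * (m.choose i) * ((m+1+l-i).choose (j+1-i))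
          = (l.choose j : ℝ) + (l.choose (j+1) : ℝ) := by
        have hterm : ∀ i ∈ Finset.range (j+1),
            (-1:ℝ)^i * (m.choose i) * ((m+1+l-i).choose (j+1-i))
              = (-1:ℝ)^i * (m.choose i) * ((m+l-i).choose (j-i))
                + (-1:ℝ)^i * (m.choose i) * ((m+l-i).choose (j+1-i)) := by
          intro i hi
          have hij : i ≤ j := by have := Finset.mem_range.mp hi; omega
          by_cases him : i ≤ m + l
          · have h1 : m+1+l-i = (m+l-i)+1 := by omega
            have h2 : j+1-i = (j-i)+1 := by omega
            rw [h1, h2, Nat.choose_succ_succ]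
            push_cast
            ring
          · have h1 : m < i := by omega
            have : m.choose i = 0 := Nat.choose_eq_zero_of_lt (by omega)
            rw [this]
            push_cast
            ring
        rw [Finset.sum_range_succ, Finset.sum_congr rfl hterm, Finset.sum_add_distrib]
        rw [ih j]
        have hlast : (-1:ℝ)^(j+1) * (m.choose (j+1)) * ((m+1+l-(j+1)).choose (j+1-(j+1)))
            = (-1:ℝ)^(j+1) * (m.choose (j+1)) * ((m+l-(j+1)).choose (j+1-(j+1))) := by
          simp [Nat.sub_self]
        rw [hlast, add_assoc, ← Finset.sum_range_succ
          (fun i => (-1:ℝ)^i * (m.choose i) * ((m+l-i).choose (j+1-i))) (j+1)]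
        rw [ih (j+1)]
      rw [hV]
      ring


lemma od_nat_key {l m i j : ℕ} (hi : i ≤ j) (hj : j ≤ m + l) :
    (m + l - i).factorial * j.descFactorial i
      = ((m + l - i).choose (j - i)) * ((m + l - j).factorial * j.factorial) := by
  have h1 : (j - i).factorial * j.descFactorial i = j.factorial :=
    Nat.factorial_mul_descFactorial hi
  have h2 : (m + l - i).choose (j - i) * (j - i).factorial * ((m + l - i) - (j - i)).factorial
      = (m + l - i).factorial := Nat.choose_mul_factorial_mul_factorial (by omega)
  have h3 : (m + l - i) - (j - i) = m + l - j := by omega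
  rw [h3] at h2
  calc (m + l - i).factorial * j.descFactorial i
      = ((m + l - i).choose (j - i) * (j - i).factorial * (m + l - j).factorial) * j.descFactorial i := by rw [h2]
    _ = (m + l - i).choose (j - i) * ((m + l - j).factorial * ((j - i).factorial * j.descFactorial i)) := by ring
    _ = _ := by rw [h1]


lemma od_scalar_identity (l m j : ℕ) (hj : j ≤ m + l) :
    ∑ i ∈ Finset.range (m+1), (-1:ℝ)^i * obreshkovAlpha i l m * (j.descFactorial i)
      = obreshkovAlpha j m l * j.factorial := by
  have hfac : ((m+l).factorial : ℝ) ≠ 0 := by positivity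
  -- extend to range (m+l+1)
  have e1 : ∑ i ∈ Finset.range (m+1), (-1:ℝ)^i * obreshkovAlpha i l m * (j.descFactorial i)
      = ∑ i ∈ Finset.range (m+l+1), (-1:ℝ)^i * obreshkovAlpha i l m * (j.descFactorial i) := by
    apply Finset.sum_subset (Finset.range_subset_range.mpr (by omega))
    intro i _ hi
    have : m < i := by
      by_contra hc
      exact hi (Finset.mem_range.mpr (by omega))
    have hz : m.choose i = 0 := Nat.choose_eq_zero_of_lt this
    simp [obreshkovAlpha, hz]
  -- shrink to range (j+1)
  have e2 : ∑ i ∈ Finset.range (m+l+1), (-1:ℝ)^i * obreshkovAlpha i l m * (j.descFactorial i)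
      = ∑ i ∈ Finset.range (j+1), (-1:ℝ)^i * obreshkovAlpha i l m * (j.descFactorial i) := by
    symm
    apply Finset.sum_subset (Finset.range_subset_range.mpr (by omega))
    intro i _ hi
    have : j < i := by
      by_contra hc
      exact hi (Finset.mem_range.mpr (by omega))
    have hz : j.descFactorial i = 0 := Nat.descFactorial_of_lt this
    simp [hz]
  -- pointwise on range (j+1)
  have e3 : ∀ i ∈ Finset.range (j+1),
      (-1:ℝ)^i * obreshkovAlpha i l m * (j.descFactorial i)
        = (((m+l-j).factorial : ℝ) * j.factorial / (m+l).factorial)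
          * ((-1:ℝ)^i * (m.choose i) * ((m+l-i).choose (j-i))) := by
    intro i hi
    have hij : i ≤ j := by have := Finset.mem_range.mp hi; omega
    have hkey := od_nat_key (l := l) (m := m) hij hj
    have hkeyR : ((m+l-i).factorial : ℝ) * (j.descFactorial i)
        = ((m+l-i).choose (j-i) : ℝ) * ((m+l-j).factorial * j.factorial) := by
      exact_mod_cast congrArg (Nat.cast : ℕ → ℝ) hkey
    unfold obreshkovAlpha
    field_simp
    linear_combination ((m.choose i : ℝ)) * hkeyR
  rw [e1, e2, Finset.sum_congr rfl e3, ← Finset.mul_sum, od_choose_alt_sum l m j]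
  unfold obreshkovAlpha
  rw [Nat.add_comm l m]
  ring

end aux

/-- The truncation error of the Obreshkov formula with parameters `(l, m)`,
applied to a smooth function `z : ℝ → ℝ^s` at a fixed time `t`, is
`O(h^(l+m+1))` as `h → 0`. -/
theorem obreshkov_truncation_error (l m : ℕ) {s : ℕ} (z : ℝ → (Fin s → ℝ))
    (hz : ContDiff ℝ (⊤ : ℕ∞) z) (t : ℝ) :
    Asymptotics.IsBigO (nhds (0 : ℝ))
      (fun h : ℝ =>
        ∑ i ∈ Finset.range (m + 1),
          ((-1 : ℝ) ^ i * obreshkovAlpha i l m * h ^ i) • iteratedDeriv i z (t + h) -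
        ∑ i ∈ Finset.range (l + 1),
          (obreshkovAlpha i m l * h ^ i) • iteratedDeriv i z t)
      (fun h : ℝ => h ^ (l + m + 1)) := by
  have hzi : ∀ i : ℕ, ContDiff ℝ (⊤ : ℕ∞) (iteratedDeriv i z) := by
    intro i
    rw [iteratedDeriv_eq_iterate]
    exact hz.iterate_deriv i
  have hgi : ∀ i : ℕ, ContDiff ℝ (⊤ : ℕ∞) (fun h : ℝ => iteratedDeriv i z (t + h)) :=
    fun i => (hzi i).comp (contDiff_const.add contDiff_id)
  have hA : ContDiff ℝ (⊤ : ℕ∞) (fun h : ℝ => ∑ i ∈ Finset.range (m + 1),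
      ((-1 : ℝ) ^ i * obreshkovAlpha i l m * h ^ i) • iteratedDeriv i z (t + h)) :=
    ContDiff.sum fun i _ => (contDiff_const.mul (contDiff_id.pow i)).smul (hgi i)
  have hB : ContDiff ℝ (⊤ : ℕ∞) (fun h : ℝ => ∑ i ∈ Finset.range (l + 1),
      (obreshkovAlpha i m l * h ^ i) • iteratedDeriv i z t) :=
    ContDiff.sum fun i _ => (contDiff_const.mul (contDiff_id.pow i)).smul contDiff_const
  apply od_isBigO_pow_of_iteratedDeriv_eq_zero (hA.sub hB) (l + m)
  intro j hj
  have hsub := od_iteratedDeriv_sub (n := j) hA hB 0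
  rw [hsub]
  have hsum1 := od_iteratedDeriv_sum (Finset.range (m + 1))
    (fun i => fun h : ℝ => ((-1 : ℝ) ^ i * obreshkovAlpha i l m * h ^ i) • iteratedDeriv i z (t + h))
    (fun i _ => (contDiff_const.mul (contDiff_id.pow i)).smul (hgi i)) j 0
  have hsum2 := od_iteratedDeriv_sum (Finset.range (l + 1))
    (fun i => fun h : ℝ => (obreshkovAlpha i m l * h ^ i) • iteratedDeriv i z t)
    (fun i _ => (contDiff_const.mul (contDiff_id.pow i)).smul contDiff_const) j 0
  rw [hsum1, hsum2]
  -- first sum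
  have hterm1 : ∀ i ∈ Finset.range (m + 1),
      iteratedDeriv j (fun h : ℝ => ((-1 : ℝ) ^ i * obreshkovAlpha i l m * h ^ i) •
        iteratedDeriv i z (t + h)) 0
      = ((-1 : ℝ) ^ i * obreshkovAlpha i l m * (j.descFactorial i : ℝ)) • iteratedDeriv j z t := by
    intro i _
    have hfun : (fun h : ℝ => ((-1 : ℝ) ^ i * obreshkovAlpha i l m * h ^ i) •
        iteratedDeriv i z (t + h))
        = fun h : ℝ => ((-1 : ℝ) ^ i * obreshkovAlpha i l m) •
            (h ^ i • iteratedDeriv i z (t + h)) := by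
      funext h; rw [mul_smul]
    rw [hfun, od_iteratedDeriv_csmul (f := fun h : ℝ => h ^ i • iteratedDeriv i z (t + h))
      ((contDiff_id.pow i).smul (hgi i)) _ 0,
      od_iteratedDeriv_pow_smul i j (hgi i)]
    have hcomp : iteratedDeriv (j - i) (fun h : ℝ => iteratedDeriv i z (t + h)) 0
        = iteratedDeriv (j - i + i) z t := by
      rw [iteratedDeriv_comp_const_add (j - i) (iteratedDeriv i z) t]
      show iteratedDeriv (j - i) (iteratedDeriv i z) (t + 0) = _
      rw [add_zero, od_iteratedDeriv_iteratedDeriv]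
    rw [hcomp]
    by_cases hij : i ≤ j
    · rw [Nat.sub_add_cancel hij, smul_smul, mul_assoc]
    · have hz0 : j.descFactorial i = 0 := Nat.descFactorial_of_lt (by omega)
      rw [hz0]
      simp
  rw [Finset.sum_congr rfl hterm1, ← Finset.sum_smul]
  -- second sum
  have hterm2 : ∀ i ∈ Finset.range (l + 1),
      iteratedDeriv j (fun h : ℝ => (obreshkovAlpha i m l * h ^ i) • iteratedDeriv i z t) 0
      = if i = j then (obreshkovAlpha j m l * (j.factorial : ℝ)) • iteratedDeriv j z t else 0 := by
    intro i _
    have hfun : (fun h : ℝ => (obreshkovAlpha i m l * h ^ i) • iteratedDeriv i z t)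
        = fun h : ℝ => obreshkovAlpha i m l • (h ^ i • (fun _ : ℝ => iteratedDeriv i z t) h) := by
      funext h; rw [mul_smul]
    rw [hfun, od_iteratedDeriv_csmul (f := fun h : ℝ => h ^ i • (fun _ : ℝ => iteratedDeriv i z t) h)
      ((contDiff_id.pow i).smul contDiff_const) _ 0,
      od_iteratedDeriv_pow_smul i j contDiff_const,
      od_iteratedDeriv_const (iteratedDeriv i z t) 0]
    rcases lt_trichotomy i j with hlt | heq | hgt
    · have : ¬ (j - i = 0) := by omega
      rw [if_neg this, if_neg (by omega : ¬ i = j)]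
      simp
    · subst heq
      rw [if_pos (Nat.sub_self i), if_pos rfl, Nat.descFactorial_self, smul_smul]
    · have hz0 : j.descFactorial i = 0 := Nat.descFactorial_of_lt hgt
      rw [hz0, if_neg (by omega : ¬ i = j)]
      simp
  rw [Finset.sum_congr rfl hterm2]
  rw [Finset.sum_ite_eq' (Finset.range (l + 1)) j
    (fun _ => (obreshkovAlpha j m l * (j.factorial : ℝ)) • iteratedDeriv j z t)]
  rw [od_scalar_identity l m j (by omega)]
  by_cases hjl : j ∈ Finset.range (l + 1)
  · rw [if_pos hjl, sub_self]
  · rw [if_neg hjl]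
    have hjl' : l < j := by
      by_contra hc
      exact hjl (Finset.mem_range.mpr (by omega))
    have : l.choose j = 0 := Nat.choose_eq_zero_of_lt hjl'
    unfold obreshkovAlpha
    rw [this]
    simp
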